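/- arXiv:2405.05592 — 2 statements merged into one kernel-verified Lean document; each statement's English description precedes it below -/
import Mathlib

section
/- (Repulsion inequality at the real place; the approximation constant of a rational point on a quadric is at least 2.) Let n ≥ 2 and let F(x₀,…,x_n) = x₀x₁ + F₂(x₂,…,x_n), where F₂ is a quadratic form with integer coefficients in the n−1 variables x₂,…,x_n. Then there exists a constant A > 0, depending only on F₂, such that for every x = (x₀,…,x_n) ∈ ℤ^{n+1} with gcd(x₀,…,x_n) = 1, F(x) = 0, x₀ ≠ 0 and x₁ ≠ 0: ( max_{1≤i≤n} |x_i|/|x₀| )² · max_{0≤i≤n} |x_i| ≥ A. -/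
open scoped BigOperators
open Finset Filter Topology Matrix

noncomputable section

namespace Quad

/-- The integral quadratic form `x ↦ xᵀ M_F x` where `N = 2·M_F` is an integer
symmetric matrix with even diagonal, so that the value `(xᵀ N x)/2` is an integer. -/
def Fint {m : ℕ} (N : Matrix (Fin m) (Fin m) ℤ) (x : Fin m → ℤ) : ℤ :=
  (∑ i, ∑ j, N i j * x i * x j) / 2

/-- The corresponding real quadratic form `x ↦ xᵀ M_F x`, `N = 2·M_F`. -/
def FR {m : ℕ} (N : Matrix (Fin m) (Fin m) ℤ) (x : Fin m → ℝ) : ℝ :=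
  (∑ i, ∑ j, (N i j : ℝ) * x i * x j) / 2

/-- The real quadratic form attached to a real matrix. -/
def QFR {m : ℕ} (A : Matrix (Fin m) (Fin m) ℝ) (x : Fin m → ℝ) : ℝ :=
  ∑ i, ∑ j, A i j * x i * x j

/-- The gradient `∇F(x) = 2 M_F x = N x`. -/
def grad {m : ℕ} (N : Matrix (Fin m) (Fin m) ℤ) (x : Fin m → ℤ) : Fin m → ℤ :=
  fun i => ∑ j, N i j * x j

/-- `H_{λ,L}(y) = F(λ)/L + ∇F(λ)·y` (assuming `L ∣ F(λ)`). -/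
def Hpoly {m : ℕ} (N : Matrix (Fin m) (Fin m) ℤ) (L : ℕ) (lam y : Fin m → ℤ) : ℤ :=
  Fint N lam / (L : ℤ) + ∑ i, grad N lam i * y i

/-- The additive character `e_q(t) = exp(2πit/q)`. -/
def eChar (q : ℕ) (t : ℝ) : ℂ := Complex.exp (2 * Real.pi * Complex.I * (t : ℂ) / (q : ℂ))

/-- The dual form value `N_F(c) = cᵀ · adj(N) · c`, `N = 2 M_F`; this equals `2ⁿ F*(c)`. -/
def dualF {m : ℕ} (N : Matrix (Fin m) (Fin m) ℤ) (c : Fin m → ℤ) : ℤ :=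
  ∑ i, ∑ j, N.adjugate i j * c i * c j

/-- The embedding sending the `i`-th of the `n-1` variables of `F₂` to coordinate `i+2`. -/
def emb {n : ℕ} (i : Fin (n-1)) : Fin (n+1) := ⟨i.val + 2, by have h := i.isLt; omega⟩

/-- The quadratic Gauss sum `ι_q = Σ_{x mod q} e_q(x²)`. -/
def iotaSum (q : ℕ) : ℂ := ∑ x ∈ Finset.range q, eChar q ((x : ℝ)^2)

open Classical in
/-- The exponential sum `S_{q,L,λ}(c)`. -/
def Sq (n : ℕ) (N : Matrix (Fin (n+1)) (Fin (n+1)) ℤ) (q L : ℕ)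
    (lam c : Fin (n+1) → ℤ) : ℂ :=
  ∑ a ∈ (Finset.range q).filter (fun a => Nat.gcd a q = 1),
    ∑ σ ∈ (Finset.univ : Finset (Fin (n+1) → Fin (q*L))).filter
        (fun σ => (L : ℤ) ∣ Hpoly N L lam (fun i => ((σ i : ℕ) : ℤ))),
      eChar (q*L)
        (((a : ℤ) * (Hpoly N L lam (fun i => ((σ i : ℕ) : ℤ))
            + (L : ℤ) * Fint N (fun i => ((σ i : ℕ) : ℤ)))
          + ∑ i, c i * ((σ i : ℕ) : ℤ) : ℤ) : ℝ)

/-- The good-modulus factor `S⁽¹⁾_{q,L,λ}(c)` (for `q = q₁q₂`, `gcd(q₁,2LD) = 1`). -/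
def S1 (n : ℕ) (N : Matrix (Fin (n+1)) (Fin (n+1)) ℤ) (q₁ q₂ L : ℕ) (k₁ : ℤ)
    (lam c : Fin (n+1) → ℤ) : ℂ :=
  ∑ σ : Fin (n+1) → Fin q₁,
    ∑ a ∈ (Finset.range q₁).filter (fun a => Nat.gcd a q₁ = 1),
      eChar q₁
        (((a : ℤ) * (((q₂ : ℤ) * (L : ℤ))^2 * Fint N (fun i => ((σ i : ℕ) : ℤ))
              + (q₂ : ℤ) * ((∑ i, grad N lam i * ((σ i : ℕ) : ℤ)) + k₁))
          + ∑ i, c i * ((σ i : ℕ) : ℤ) : ℤ) : ℝ)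

open Classical in
/-- The bad-modulus factor `S⁽²⁾_{q,L,λ}(c)`. -/
def S2 (n : ℕ) (N : Matrix (Fin (n+1)) (Fin (n+1)) ℤ) (q₁ q₂ L : ℕ) (k₂ : ℤ)
    (lam c : Fin (n+1) → ℤ) : ℂ :=
  ∑ σ ∈ (Finset.univ : Finset (Fin (n+1) → Fin (q₂*L))).filter
      (fun σ => (L : ℤ) ∣ Hpoly N L lam (fun i => (q₁ : ℤ) * ((σ i : ℕ) : ℤ))),
    ∑ a ∈ (Finset.range q₂).filter (fun a => Nat.gcd a q₂ = 1),
      eChar (q₂*L)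
        (((a : ℤ) * ((q₁ : ℤ)^2 * (L : ℤ) * Fint N (fun i => ((σ i : ℕ) : ℤ))
              + (q₁ : ℤ) * ((∑ i, grad N lam i * ((σ i : ℕ) : ℤ)) + k₂))
          + ∑ i, c i * ((σ i : ℕ) : ℤ) : ℤ) : ℝ)

/-- The complete quadratic exponential sum `T_q(G,m;c)`. -/
def Tq (n : ℕ) (NG : Matrix (Fin (n+1)) (Fin (n+1)) ℤ) (q : ℕ) (m : ℤ)
    (c : Fin (n+1) → ℤ) : ℂ :=
  ∑ a ∈ (Finset.range q).filter (fun a => Nat.gcd a q = 1),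
    ∑ b : Fin (n+1) → Fin q,
      eChar q (((a : ℤ) * (Fint NG (fun i => ((b i : ℕ) : ℤ)) - m)
        + ∑ i, c i * ((b i : ℕ) : ℤ) : ℤ) : ℝ)

/-- The counting function whose normalised limit is the local density
`σ_p(W;L,λ)`: the number of `v ∈ (ℤ/p^kℤ)^{n+1}` with `F(v) ≡ 0 mod p^k` and
`v ≡ λ mod p^{ord_p L}`. -/
def localCount (n : ℕ) (N : Matrix (Fin (n+1)) (Fin (n+1)) ℤ) (L : ℕ)
    (lam : Fin (n+1) → ℤ) (p k : ℕ) : ℕ :=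
  Nat.card {v : Fin (n+1) → Fin (p^k) //
    ((p : ℤ)^k ∣ Fint N (fun i => ((v i : ℕ) : ℤ))) ∧
    ∀ i, (p : ℤ)^(padicValNat p L) ∣ ((v i : ℕ) : ℤ) - lam i}

/-- The coordinates `t(x) = Mx` of an integer vector. -/
def tmap (n : ℕ) (M : Matrix (Fin (n+1)) (Fin (n+1)) ℝ) (x : Fin (n+1) → ℤ) :
    Fin (n+1) → ℝ :=
  M.mulVec (fun i => (x i : ℝ))

/-- The counting function `N_W((R,ξ),(L,Γ);B)` for the affine cone. -/
def NW (n : ℕ) (N : Matrix (Fin (n+1)) (Fin (n+1)) ℤ)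
    (M : Matrix (Fin (n+1)) (Fin (n+1)) ℝ) (a b : Fin (n+1) → ℝ)
    (B R : ℝ) (L : ℕ) (Γ : Fin (n+1) → ℤ) : ℕ :=
  Nat.card {x : Fin (n+1) → ℤ //
    x ≠ 0 ∧ Fint N x = 0 ∧ (∀ i, (L : ℤ) ∣ x i - Γ i) ∧
    tmap n M x 0 ≠ 0 ∧
    (∀ j : Fin (n+1), 2 ≤ j.val →
      a j ≤ R * (tmap n M x j / tmap n M x 0) ∧ R * (tmap n M x j / tmap n M x 0) ≤ b j) ∧
    (∀ i, |tmap n M x i| ≤ B)}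

/-- Twice the counting function `N_V((R,ξ),(L,Λ);B)` for the projective quadric:
the number of primitive integer vectors on the cone, in the real zoom region,
of height at most `B`, congruent mod `L` to a unit multiple of `Γ`. -/
def NV (n : ℕ) (N : Matrix (Fin (n+1)) (Fin (n+1)) ℤ)
    (M : Matrix (Fin (n+1)) (Fin (n+1)) ℝ) (a b : Fin (n+1) → ℝ)
    (B R : ℝ) (L : ℕ) (Γ : Fin (n+1) → ℤ) : ℕ :=
  Nat.card {x : Fin (n+1) → ℤ //
    Finset.univ.gcd x = 1 ∧ Fint N x = 0 ∧
    tmap n M x 0 ≠ 0 ∧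
    (∀ j : Fin (n+1), 2 ≤ j.val →
      a j ≤ R * (tmap n M x j / tmap n M x 0) ∧ R * (tmap n M x j / tmap n M x 0) ≤ b j) ∧
    (∀ i, |tmap n M x i| ≤ B) ∧
    (∃ γ : (ZMod L)ˣ, ∀ i, ((x i : ZMod L)) = (γ : ZMod L) * ((Γ i : ZMod L)))}

/-- The value of the singular integral `I_R` for `R ≥ R₀`. -/
def IRval (n : ℕ) (M : Matrix (Fin (n+1)) (Fin (n+1)) ℝ) (a b : Fin (n+1) → ℝ)
    (R : ℝ) : ℝ :=
  2 * (∏ j ∈ Finset.univ.filter (fun j : Fin (n+1) => 2 ≤ j.val), (b j - a j))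
    / (((n : ℝ) - 1) * |M.det| * R^(n-1))

/-- The error exponent factor `E_τ(B)`. -/
def Etau (n : ℕ) (τ B : ℝ) : ℝ :=
  if 5 ≤ n then B ^ (-(((n : ℝ) - 3) * τ / (5 * (n : ℝ) - 7)))
  else B ^ (-(2 * τ / 17))

/-- The error factor `E_τ(1;B)` from the upper-bound range `-1 < τ < 1`. -/
def Etau1 (n : ℕ) (τ B : ℝ) : ℝ :=
  if 5 ≤ n then B ^ (-(((n : ℝ) - 3) * τ / 2))
  else B ^ (-τ) + B ^ (-((1 + τ)/4))

end Quad

namespace Quad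

/-- Repulsion inequality at the real place: for `F = x₀x₁ + F₂(x₂,…,x_n)` there is
`A > 0` with `(max_{1≤i≤n}|x_i|/|x₀|)² · max_{0≤i≤n}|x_i| ≥ A` for every primitive
integer zero of `F` with `x₀, x₁ ≠ 0`. -/
theorem repulsion_real (n : ℕ) (hn : 2 ≤ n)
    (A : Matrix (Fin (n-1)) (Fin (n-1)) ℤ) :
    ∃ Acst : ℝ, 0 < Acst ∧
      ∀ x : Fin (n+1) → ℤ,
        Finset.univ.gcd x = 1 →
        x 0 * x 1 + (∑ i, ∑ j, A i j * x (emb i) * x (emb j)) = 0 →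
        x 0 ≠ 0 → x 1 ≠ 0 →
        Acst ≤
          ((((Finset.univ.filter (fun i : Fin (n+1) => 1 ≤ i.val)).sup
              (fun i => (x i).natAbs) : ℕ) : ℝ) / |(x 0 : ℝ)|)^2
            * ((Finset.univ.sup (fun i => (x i).natAbs) : ℕ) : ℝ) := by
  classical
  set C : ℕ := ∑ i, ∑ j, (A i j).natAbs with hC
  refine ⟨1 / ((C : ℝ) + 1), by positivity, ?_⟩
  intro x hgcd heq hx0 hx1
  set m₁ : ℕ := (Finset.univ.filter (fun i : Fin (n+1) => 1 ≤ i.val)).sup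
      (fun i => (x i).natAbs) with hm
  set H : ℕ := Finset.univ.sup (fun i => (x i).natAbs) with hHdef
  have hone : ((1 : Fin (n+1)) : ℕ) = 1 := by
    rw [Fin.val_one']
    exact Nat.mod_eq_of_lt (by omega)
  have h1m : (x 1).natAbs ≤ m₁ := by
    rw [hm]
    exact Finset.le_sup (f := fun i => (x i).natAbs)
      (Finset.mem_filter.mpr ⟨Finset.mem_univ _, hone.ge⟩)
  have hm1 : 1 ≤ m₁ := le_trans (Int.natAbs_pos.mpr hx1) h1m
  have h0H : (x 0).natAbs ≤ H := by
    rw [hHdef]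
    exact Finset.le_sup (f := fun i => (x i).natAbs) (Finset.mem_univ _)
  have hmH : m₁ ≤ H := by
    rw [hm, hHdef]
    exact Finset.sup_mono (Finset.filter_subset _ _)
  have hembm : ∀ i : Fin (n-1), (x (emb i)).natAbs ≤ m₁ := by
    intro i
    rw [hm]
    exact Finset.le_sup (f := fun i => (x i).natAbs) (by simp [emb])
  have hCsum : (C : ℤ) = ∑ i, ∑ j, |A i j| := by
    rw [hC]
    push_cast [Int.natCast_natAbs]
    ring
  have key : |x 0 * x 1| ≤ (C : ℤ) * (m₁ : ℤ) * (m₁ : ℤ) := by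
    have heq' : x 0 * x 1 = -(∑ i, ∑ j, A i j * x (emb i) * x (emb j)) := by
      linarith
    calc |x 0 * x 1| = |∑ i, ∑ j, A i j * x (emb i) * x (emb j)| := by
          rw [heq', abs_neg]
      _ ≤ ∑ i, ∑ j, |A i j * x (emb i) * x (emb j)| := by
          refine (Finset.abs_sum_le_sum_abs _ _).trans ?_
          exact Finset.sum_le_sum fun i _ => Finset.abs_sum_le_sum_abs _ _
      _ ≤ ∑ i, ∑ j, |A i j| * (m₁ : ℤ) * (m₁ : ℤ) := by
          refine Finset.sum_le_sum fun i _ => Finset.sum_le_sum fun j _ => ?_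
          rw [abs_mul, abs_mul]
          have h1 : |x (emb i)| ≤ (m₁ : ℤ) := by
            rw [Int.abs_eq_natAbs]; exact_mod_cast hembm i
          have h2 : |x (emb j)| ≤ (m₁ : ℤ) := by
            rw [Int.abs_eq_natAbs]; exact_mod_cast hembm j
          exact mul_le_mul (mul_le_mul_of_nonneg_left h1 (abs_nonneg _)) h2
            (abs_nonneg _) (by positivity)
      _ = (C : ℤ) * (m₁ : ℤ) * (m₁ : ℤ) := by
          rw [hCsum]
          simp only [← Finset.sum_mul]
  set a : ℝ := |(x 0 : ℝ)| with ha
  have hax : a = ((x 0).natAbs : ℝ) := by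
    rw [ha, Nat.cast_natAbs, Int.cast_abs]
  have hapos : 0 < a := by
    rw [ha]
    exact abs_pos.mpr (by exact_mod_cast hx0)
  have hb1 : (1 : ℝ) ≤ |(x 1 : ℝ)| := by
    have h : (1 : ℤ) ≤ |x 1| := Int.one_le_abs hx1
    rw [← Int.cast_abs]
    exact_mod_cast h
  have keyR : a * |(x 1 : ℝ)| ≤ (C : ℝ) * (m₁ : ℝ) * (m₁ : ℝ) := by
    rw [ha, ← abs_mul]
    have h : |((x 0 * x 1 : ℤ) : ℝ)| ≤ (C : ℝ) * (m₁ : ℝ) * (m₁ : ℝ) := by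
      rw [← Int.cast_abs]
      exact_mod_cast key
    exact_mod_cast h
  have haC : a ≤ (C : ℝ) * (m₁ : ℝ) * (m₁ : ℝ) := by
    calc a = a * 1 := by ring
      _ ≤ a * |(x 1 : ℝ)| := mul_le_mul_of_nonneg_left hb1 hapos.le
      _ ≤ _ := keyR
  have hm1R : (1 : ℝ) ≤ (m₁ : ℝ) := by exact_mod_cast hm1
  have hmHR : (m₁ : ℝ) ≤ (H : ℝ) := by exact_mod_cast hmH
  have haHR : a ≤ (H : ℝ) := by rw [hax]; exact_mod_cast h0H
  have hCnn : (0 : ℝ) ≤ (C : ℝ) := Nat.cast_nonneg _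
  have hHpos : (0 : ℝ) < (H : ℝ) := lt_of_lt_of_le (lt_of_lt_of_le one_pos hm1R) hmHR
  rw [div_pow, div_mul_eq_mul_div, div_le_div_iff₀ (by positivity) (by positivity)]
  -- goal : 1 * (a ^ 2) ≤ (m₁:ℝ)^2 * H * (C + 1)
  nlinarith [mul_le_mul_of_nonneg_left haC hapos.le,
    mul_le_mul_of_nonneg_left haHR (mul_nonneg (mul_nonneg hCnn
      (Nat.cast_nonneg m₁ : (0:ℝ) ≤ (m₁:ℝ))) (Nat.cast_nonneg m₁ : (0:ℝ) ≤ (m₁:ℝ))),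
    sq_nonneg ((m₁ : ℝ)), hapos.le, mul_pos hapos hHpos]

end Quad
end
end

section
/- (Repulsion inequality at a non-archimedean place.) Let n ≥ 2 and let F(x₀,…,x_n) = x₀x₁ + F₂(x₂,…,x_n), where F₂ is a quadratic form with integer coefficients in the n−1 variables x₂,…,x_n. Then for every prime p and every x = (x₀,…,x_n) ∈ ℤ^{n+1} with gcd(x₀,…,x_n) = 1, F(x) = 0, x₀ ≠ 0 and x₁ ≠ 0: ( max_{1≤i≤n} |x_i/x₀|_p )² · max_{0≤i≤n} |x_i| ≥ 1, where |·|_p denotes the p-adic absolute value on ℚ and |x_i| the usual archimedean absolute value. -/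
open scoped BigOperators
open Finset Filter Topology Matrix

noncomputable section

namespace Quad

/-- Repulsion inequality at a non-archimedean place: for `F = x₀x₁ + F₂(x₂,…,x_n)`,
every prime `p` and every primitive integer zero of `F` with `x₀, x₁ ≠ 0` satisfies
`(max_{1≤i≤n}|x_i/x₀|_p)² · max_{0≤i≤n}|x_i| ≥ 1`. -/
theorem repulsion_padic (n : ℕ) (hn : 2 ≤ n)
    (A : Matrix (Fin (n-1)) (Fin (n-1)) ℤ)
    (p : ℕ) (hp : p.Prime) :
    ∀ x : Fin (n+1) → ℤ,
      Finset.univ.gcd x = 1 →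
      x 0 * x 1 + (∑ i, ∑ j, A i j * x (emb i) * x (emb j)) = 0 →
      x 0 ≠ 0 → x 1 ≠ 0 →
      (1 : ℚ) ≤
        ((Finset.univ.filter (fun i : Fin (n+1) => 1 ≤ i.val)).sup'
            (⟨⟨1, by omega⟩, by simp⟩ :
              ((Finset.univ.filter (fun i : Fin (n+1) => 1 ≤ i.val))).Nonempty)
            (fun i => padicNorm p ((x i : ℚ) / (x 0 : ℚ))))^2
          * ((Finset.univ.sup (fun i => (x i).natAbs) : ℕ) : ℚ) := by
  intro x hgcd heq hx0 hx1
  haveI : Fact p.Prime := ⟨hp⟩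
  set S := (Finset.univ.filter (fun i : Fin (n+1) => 1 ≤ i.val)) with hS
  have hSne : S.Nonempty := ⟨⟨1, by omega⟩, by simp [hS]⟩
  set m := S.sup' hSne (fun i => padicNorm p ((x i : ℚ) / (x 0 : ℚ))) with hm
  set H := Finset.univ.sup (fun i : Fin (n+1) => (x i).natAbs) with hHdef
  -- the index 1 as Fin (n+1)
  have h1v : ((1 : Fin (n+1)) : ℕ) = 1 := by
    rw [Fin.val_one']
    exact Nat.mod_eq_of_lt (by omega)
  have h1S : (1 : Fin (n+1)) ∈ S := by
    simp only [hS, Finset.mem_filter, Finset.mem_univ, true_and, h1v]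
    exact le_rfl
  have hH1 : (1 : ℚ) ≤ (H : ℚ) := by
    have : 1 ≤ (x 1).natAbs := by
      have := Int.natAbs_pos.mpr hx1; omega
    have hle : (x 1).natAbs ≤ H :=
      Finset.le_sup (f := fun i : Fin (n+1) => (x i).natAbs) (Finset.mem_univ 1)
    exact_mod_cast le_trans this hle
  have hmem : ∀ i ∈ S, padicNorm p ((x i : ℚ) / (x 0 : ℚ)) ≤ m := by
    intro i hi
    rw [hm]
    exact Finset.le_sup' (fun i => padicNorm p ((x i : ℚ) / (x 0 : ℚ))) hi
  have hx0Q : (x 0 : ℚ) ≠ 0 := Int.cast_ne_zero.mpr hx0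
  have hm1 : padicNorm p ((x 1 : ℚ) / (x 0 : ℚ)) ≤ m := hmem 1 h1S
  have hmpos : 0 < m := by
    refine lt_of_lt_of_le ?_ hm1
    have : ((x 1 : ℚ) / (x 0 : ℚ)) ≠ 0 :=
      div_ne_zero (Int.cast_ne_zero.mpr hx1) hx0Q
    exact lt_of_le_of_ne (padicNorm.nonneg _) (Ne.symm (padicNorm.nonzero this))
  by_cases hbig : 1 ≤ m
  · nlinarith
  push_neg at hbig
  -- m < 1 : all padicNorm (x i) < 1 for i ∈ S, hence p ∣ x i for i ≥ 1
  have hx0norm : padicNorm p ((x 0 : ℚ)) = 1 := by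
    rw [padicNorm.int_eq_one_iff]
    intro hdvd
    have hall : (p : ℤ) ∣ Finset.univ.gcd x := by
      refine Finset.dvd_gcd fun i _ => ?_
      by_cases hi : i ∈ S
      · have h2 := hmem i hi
        rw [padicNorm.div] at h2
        have hle1 : padicNorm p ((x 0 : ℚ)) ≤ 1 := padicNorm.of_int _
        have hnn : 0 ≤ padicNorm p ((x 0 : ℚ)) := padicNorm.nonneg _
        have hbpos : 0 < padicNorm p ((x 0 : ℚ)) :=
          lt_of_le_of_ne hnn (fun h0 => hx0Q (padicNorm.zero_of_padicNorm_eq_zero h0.symm))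
        have h3 : padicNorm p ((x i : ℚ)) ≤ m * padicNorm p ((x 0 : ℚ)) :=
          (div_le_iff₀ hbpos).mp h2
        have : padicNorm p ((x i : ℚ)) < 1 := by nlinarith
        exact (padicNorm.int_lt_one_iff _).mp this
      · have h0v : ((0 : Fin (n+1)) : ℕ) = 0 := rfl
        have : i = 0 := by
          simp only [hS, Finset.mem_filter, Finset.mem_univ, true_and, not_le] at hi
          exact Fin.ext (by omega)
        rw [this]; exact hdvd
    rw [hgcd] at hall
    have hone : ((p : ℤ)) = 1 := Int.eq_one_of_dvd_one (by positivity) hall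
    have hp1 : p = 1 := by exact_mod_cast hone
    exact hp.one_lt.ne' hp1
  -- hence for i ∈ S, padicNorm (x i) ≤ m
  have hnormle : ∀ i ∈ S, padicNorm p ((x i : ℚ)) ≤ m := by
    intro i hi
    have := hmem i hi
    rwa [padicNorm.div, hx0norm, div_one] at this
  -- m is attained
  obtain ⟨i0, hi0S, hi0⟩ := Finset.exists_mem_eq_sup' hSne
    (fun i => padicNorm p ((x i : ℚ) / (x 0 : ℚ)))
  have hmi0 : m = padicNorm p ((x i0 : ℚ)) := by
    rw [hm, hi0, padicNorm.div, hx0norm, div_one]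
  have hxi0 : (x i0 : ℚ) ≠ 0 := by
    intro h
    rw [hmi0, h, padicNorm.zero] at hmpos; exact lt_irrefl _ hmpos
  set k := padicValInt p (x i0) with hk
  have hmval : m = (p : ℚ) ^ (-(k : ℤ)) := by
    rw [hmi0, padicNorm.eq_zpow_of_nonzero hxi0, padicValRat.of_int]
  -- p^k divides all x i, i ∈ S
  have hdvdk : ∀ i ∈ S, (p : ℤ) ^ k ∣ x i := by
    intro i hi
    have := hnormle i hi
    rw [hmval] at this
    have := padicNorm.dvd_iff_norm_le.mpr this
    exact_mod_cast this
  -- p^(2k) divides the quadratic part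
  have hembS : ∀ i : Fin (n-1), emb i ∈ S := by
    intro i; simp [hS, emb]
  have hdvdsum : (p : ℤ) ^ (2 * k) ∣ ∑ i, ∑ j, A i j * x (emb i) * x (emb j) := by
    refine Finset.dvd_sum fun i _ => Finset.dvd_sum fun j _ => ?_
    have : (p : ℤ) ^ (2 * k) = (p : ℤ) ^ k * (p : ℤ) ^ k := by ring
    rw [this]
    exact mul_dvd_mul ((hdvdk _ (hembS i)).mul_left _) (hdvdk _ (hembS j))
  -- hence p^(2k) ∣ x 0 * x 1, and p ∤ x 0, so p^(2k) ∣ x 1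
  have hdvd01 : (p : ℤ) ^ (2 * k) ∣ x 0 * x 1 := by
    have : x 0 * x 1 = -(∑ i, ∑ j, A i j * x (emb i) * x (emb j)) := by linarith
    rw [this]; exact hdvdsum.neg_right
  have hpx0 : ¬ (p : ℤ) ∣ x 0 := (padicNorm.int_eq_one_iff _).mp hx0norm
  have hintp : Prime (p : ℤ) := Nat.prime_iff_prime_int.mp hp
  have hdvd1 : (p : ℤ) ^ (2 * k) ∣ x 1 := by
    rcases (hintp.pow_dvd_of_dvd_mul_left _ hpx0 hdvd01) with h
    exact h
  -- so |x 1| ≥ p^(2k)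
  have hle : (p : ℤ) ^ (2 * k) ≤ ((x 1).natAbs : ℤ) :=
    Int.le_of_dvd (by exact_mod_cast Int.natAbs_pos.mpr hx1)
      (Int.dvd_natAbs.mpr hdvd1)
  have hHge : ((p : ℚ)) ^ (2 * k) ≤ (H : ℚ) := by
    have h1 : (x 1).natAbs ≤ H :=
      Finset.le_sup (f := fun i : Fin (n+1) => (x i).natAbs) (Finset.mem_univ 1)
    have : ((p:ℤ) ^ (2*k) : ℤ) ≤ (H : ℤ) := le_trans hle (by exact_mod_cast h1)
    exact_mod_cast this
  have hppos : (0:ℚ) < (p:ℚ) := by exact_mod_cast hp.pos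
  have hm2 : m^2 = ((p:ℚ)^(2*k))⁻¹ := by
    rw [hmval, _root_.zpow_neg, zpow_natCast, inv_pow, ← pow_mul, Nat.mul_comm k 2]
  calc (1:ℚ) = ((p:ℚ)^(2*k))⁻¹ * (p:ℚ)^(2*k) := (inv_mul_cancel₀ (by positivity)).symm
    _ ≤ m^2 * (H : ℚ) := by
        rw [hm2]
        exact mul_le_mul_of_nonneg_left hHge (by positivity)

end Quad
end
end
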